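/- The function (x,y) ↦ 1/((1+y)(1+x²y)) is integrable on (0,∞)×(0,∞), with integral π²/2. -/

import Mathlib

open MeasureTheory Real

-- inner integral in x, for fixed y > 0
lemma aux_inner (y : ℝ) (hy : 0 < y) :
    IntegrableOn (fun x : ℝ => 1 / ((1 + y) * (1 + x^2 * y))) (Set.Ioi 0) ∧
    ∫ x in Set.Ioi (0:ℝ), 1 / ((1 + y) * (1 + x^2 * y)) = π / (2 * Real.sqrt y * (1 + y)) := by
  set s := Real.sqrt y with hs
  have hs0 : 0 < s := Real.sqrt_pos.mpr hy
  have hs2 : s ^ 2 = y := Real.sq_sqrt hy.le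
  have h1y : (0:ℝ) < 1 + y := by linarith
  set g : ℝ → ℝ := fun x => arctan (s * x) / ((1 + y) * s) with hg
  have hderiv : ∀ x ∈ Set.Ici (0:ℝ), HasDerivAt g (1 / ((1 + y) * (1 + x^2 * y))) x := by
    intro x _
    have h1 : HasDerivAt (fun x : ℝ => s * x) s x := by
      simpa using (hasDerivAt_id x).const_mul s
    have h2 : HasDerivAt (fun x : ℝ => arctan (s * x))
        ((1 / (1 + (s * x) ^ 2)) * s) x := (Real.hasDerivAt_arctan (s * x)).comp x h1
    have h3 := h2.div_const ((1 + y) * s)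
    convert h3 using 1
    · rfl
    · rfl
    have hx2 : (s * x) ^ 2 = x ^ 2 * y := by rw [mul_pow, hs2]; ring
    rw [hx2]
    have hpos : (0:ℝ) < 1 + x ^ 2 * y := by positivity
    field_simp
  have hcont : ContinuousWithinAt g (Set.Ici 0) 0 :=
    ((Real.continuous_arctan.comp (continuous_const.mul continuous_id)).div_const
      _).continuousWithinAt
  have hpos : ∀ x ∈ Set.Ioi (0:ℝ), 0 ≤ 1 / ((1 + y) * (1 + x^2 * y)) := by
    intro x _; positivity
  have hlim : Filter.Tendsto g Filter.atTop (nhds (π / 2 / ((1 + y) * s))) := by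
    apply Filter.Tendsto.div_const
    have : Filter.Tendsto (fun x : ℝ => s * x) Filter.atTop Filter.atTop :=
      Filter.Tendsto.const_mul_atTop hs0 Filter.tendsto_id
    exact (tendsto_nhds_of_tendsto_nhdsWithin Real.tendsto_arctan_atTop).comp this
  have hval : π / 2 / ((1 + y) * s) - g 0 = π / (2 * s * (1 + y)) := by
    have hne : (1 + y) * s ≠ 0 := by positivity
    simp only [hg, mul_zero, arctan_zero, zero_div, sub_zero]
    rw [div_div]
    ring_nf
  constructor
  · exact integrableOn_Ioi_deriv_of_nonneg hcont (fun x hx => hderiv x (Set.mem_Ici.mpr (le_of_lt hx))) hpos hlim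
  · rw [integral_Ioi_of_hasDerivAt_of_nonneg hcont (fun x hx => hderiv x (Set.mem_Ici.mpr (le_of_lt hx))) hpos hlim]
    exact hval

-- outer integral in y
lemma aux_outer :
    IntegrableOn (fun y : ℝ => π / (2 * Real.sqrt y * (1 + y))) (Set.Ioi 0) ∧
    ∫ y in Set.Ioi (0:ℝ), π / (2 * Real.sqrt y * (1 + y)) = π ^ 2 / 2 := by
  set G : ℝ → ℝ := fun y => π * arctan (Real.sqrt y) with hG
  have hderiv : ∀ y ∈ Set.Ioi (0:ℝ), HasDerivAt G (π / (2 * Real.sqrt y * (1 + y))) y := by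
    intro y hy
    have hy : (0:ℝ) < y := hy
    have hs0 : 0 < Real.sqrt y := Real.sqrt_pos.mpr hy
    have hs2 : Real.sqrt y ^ 2 = y := Real.sq_sqrt hy.le
    have h1 : HasDerivAt Real.sqrt (1 / (2 * Real.sqrt y)) y := Real.hasDerivAt_sqrt hy.ne'
    have h2 : HasDerivAt (fun y => arctan (Real.sqrt y))
        ((1 / (1 + Real.sqrt y ^ 2)) * (1 / (2 * Real.sqrt y))) y :=
      (Real.hasDerivAt_arctan (Real.sqrt y)).comp y h1
    have h3 := h2.const_mul π
    convert h3 using 1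
    · rfl
    · rfl
    rw [hs2, one_div, one_div, ← mul_inv, ← div_eq_mul_inv]
    ring_nf
  have hcont : ContinuousWithinAt G (Set.Ici 0) 0 :=
    (continuous_const.mul (Real.continuous_arctan.comp
      Real.continuous_sqrt)).continuousWithinAt
  have hpos : ∀ y ∈ Set.Ioi (0:ℝ), 0 ≤ π / (2 * Real.sqrt y * (1 + y)) := by
    intro y hy
    have hy : (0:ℝ) < y := hy
    have := Real.pi_pos
    have := Real.sqrt_pos.mpr hy
    positivity
  have hlim : Filter.Tendsto G Filter.atTop (nhds (π * (π / 2))) := by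
    apply Filter.Tendsto.const_mul
    have hsq : Filter.Tendsto Real.sqrt Filter.atTop Filter.atTop := by
      apply Filter.tendsto_atTop_atTop.mpr
      intro b
      refine ⟨b ^ 2, fun a ha => ?_⟩
      calc b ≤ |b| := le_abs_self b
        _ = Real.sqrt (b ^ 2) := (Real.sqrt_sq_eq_abs b).symm
        _ ≤ Real.sqrt a := Real.sqrt_le_sqrt ha
    exact (tendsto_nhds_of_tendsto_nhdsWithin Real.tendsto_arctan_atTop).comp hsq
  have hval : π * (π / 2) - G 0 = π ^ 2 / 2 := by
    simp [hG]
    ring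
  constructor
  · exact integrableOn_Ioi_deriv_of_nonneg hcont hderiv hpos hlim
  · rw [integral_Ioi_of_hasDerivAt_of_nonneg hcont hderiv hpos hlim]
    exact hval

theorem stmt13 :
    IntegrableOn (fun p : ℝ × ℝ => 1 / ((1 + p.2) * (1 + p.1^2 * p.2)))
      (Set.Ioi (0:ℝ) ×ˢ Set.Ioi (0:ℝ)) ∧
    ∫ p in Set.Ioi (0:ℝ) ×ˢ Set.Ioi (0:ℝ),
        1 / ((1 + p.2) * (1 + p.1^2 * p.2)) = π^2 / 2 := by
  set μ := (volume : Measure ℝ).restrict (Set.Ioi 0) with hμ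
  set f : ℝ × ℝ → ℝ := fun p => 1 / ((1 + p.2) * (1 + p.1^2 * p.2)) with hf
  have hprod : (volume : Measure (ℝ × ℝ)).restrict (Set.Ioi (0:ℝ) ×ˢ Set.Ioi (0:ℝ))
      = μ.prod μ := by
    rw [hμ, Measure.prod_restrict, ← Measure.volume_eq_prod]
  have hmeas : AEStronglyMeasurable f (μ.prod μ) := by
    apply Measurable.aestronglyMeasurable
    fun_prop
  -- a.e. y > 0 for μ
  have hae : ∀ᵐ y ∂μ, y ∈ Set.Ioi (0:ℝ) :=
    ae_restrict_mem measurableSet_Ioi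
  -- norms of sections integrate to π/(2√y(1+y))
  have hsec : ∀ y ∈ Set.Ioi (0:ℝ),
      (∫ x, ‖f (x, y)‖ ∂μ) = π / (2 * Real.sqrt y * (1 + y)) := by
    intro y hy
    have hy' : (0:ℝ) < y := hy
    have : (∫ x, ‖f (x, y)‖ ∂μ) = ∫ x in Set.Ioi (0:ℝ), 1 / ((1 + y) * (1 + x^2 * y)) := by
      rw [hμ]
      apply setIntegral_congr_fun measurableSet_Ioi
      intro x hx
      have hx' : (0:ℝ) < x := hx
      have h1 : (0:ℝ) < 1 + y := by linarith
      have h2 : (0:ℝ) < 1 + x ^ 2 * y := by positivity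
      simp only [hf, Real.norm_eq_abs]
      rw [abs_of_nonneg (by positivity)]
    rw [this, (aux_inner y hy').2]
  have hint : Integrable f (μ.prod μ) := by
    rw [integrable_prod_iff' hmeas]
    constructor
    · filter_upwards [hae] with y hy
      exact (aux_inner y hy).1
    · apply Integrable.congr aux_outer.1
      filter_upwards [hae] with y hy
      exact (hsec y hy).symm
  constructor
  · rw [IntegrableOn, hprod]; exact hint
  · calc ∫ p in Set.Ioi (0:ℝ) ×ˢ Set.Ioi (0:ℝ), f p
        = ∫ p, f p ∂(μ.prod μ) := by rw [← hprod]
      _ = ∫ y, ∫ x, f (x, y) ∂μ ∂μ := integral_prod_symm f hint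
      _ = ∫ y in Set.Ioi (0:ℝ), π / (2 * Real.sqrt y * (1 + y)) := by
          rw [hμ]
          apply setIntegral_congr_fun measurableSet_Ioi
          intro y hy
          have hy' : (0:ℝ) < y := hy
          simp only [hf]
          exact (aux_inner y hy').2
      _ = π ^ 2 / 2 := aux_outer.2
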